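/- arXiv:1501.04245 — 3 statements merged into one kernel-verified Lean document; each statement's English description precedes it below -/
import Mathlib

section
/- In a commutative grammar G = (Σ, Q, q₀, δ), if R ∈ ℕ^δ is a nonempty commutative subrun from s ∈ ℕ^Q to t ∈ ℕ^Q, then there is a transition d with R_d > 0, source(d) ∈ supp(s), such that R − [d] is a commutative subrun from s − [source(d)] + target(d) to t. -/
structure CTrans (S Q : Type) where
  src : Q
  out : S → ℤ
  tgt : Q → ℕ

instance {S Q : Type} [Fintype S] [Fintype Q] [DecidableEq S] [DecidableEq Q] :
    DecidableEq (CTrans S Q) := fun a b =>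
  decidable_of_iff (a.src = b.src ∧ a.out = b.out ∧ a.tgt = b.tgt) (by
    cases a; cases b; simp)

structure CGrammar (S Q : Type) [Fintype S] [Fintype Q] [DecidableEq S] [DecidableEq Q] where
  q0 : Q
  delta : Finset (CTrans S Q)

namespace CGrammar

variable {S Q : Type} [Fintype S] [Fintype Q] [DecidableEq S] [DecidableEq Q]

def srcCount (g : CGrammar S Q) (R : CTrans S Q → ℕ) (q : Q) : ℕ :=
  ∑ d ∈ g.delta, if d.src = q then R d else 0

def tgtCount (g : CGrammar S Q) (R : CTrans S Q → ℕ) (q : Q) : ℕ :=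
  ∑ d ∈ g.delta, R d * d.tgt q

def parikh (g : CGrammar S Q) (R : CTrans S Q → ℕ) (a : S) : ℤ :=
  ∑ d ∈ g.delta, (R d : ℤ) * d.out a

def Step (g : CGrammar S Q) (R : CTrans S Q → ℕ) (p q : Q) : Prop :=
  ∃ d ∈ g.delta, 0 < R d ∧ d.src = p ∧ 0 < d.tgt q

def ind (p : Q) : Q → ℕ := fun q => if q = p then 1 else 0

/-- `R` is a commutative subrun from `s` to `t`: support in `delta`,
Euler condition, and connectivity from `s`. -/
def IsSubrun (g : CGrammar S Q) (R : CTrans S Q → ℕ) (s t : Q → ℕ) : Prop :=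
  (∀ d, 0 < R d → d ∈ g.delta) ∧
  (∀ q, (g.srcCount R q : ℤ) - (s q : ℤ) = (g.tgtCount R q : ℤ) - (t q : ℤ)) ∧
  (∀ q, 0 < g.srcCount R q → ∃ p, 0 < s p ∧ Relation.ReflTransGen (g.Step R) p q)

def IsRun (g : CGrammar S Q) (R : CTrans S Q → ℕ) (p : Q) : Prop :=
  g.IsSubrun R (ind p) 0

def IsCycle (g : CGrammar S Q) (R : CTrans S Q → ℕ) (p : Q) : Prop :=
  g.IsSubrun R (ind p) (ind p)

def size (g : CGrammar S Q) (R : CTrans S Q → ℕ) : ℕ := ∑ d ∈ g.delta, R d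

def NormalForm (g : CGrammar S Q) : Prop :=
  ∀ d ∈ g.delta, (∑ q, d.tgt q) ≤ 2 ∧ (∑ a, |d.out a|) ≤ 1

def Regular (g : CGrammar S Q) : Prop :=
  ∀ d ∈ g.delta, (∑ q, d.tgt q) ≤ 1 ∧ (∑ a, |d.out a|) ≤ 1

def Positive (g : CGrammar S Q) : Prop :=
  ∀ d ∈ g.delta, ∀ a, 0 ≤ d.out a

/-- A simple cycle: a cycle (from some nonterminal) that is not the sum of
two nonzero cycles. -/
def SimpleCycle (g : CGrammar S Q) (C : CTrans S Q → ℕ) : Prop :=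
  (∃ p, g.IsCycle C p) ∧
  ¬ ∃ C₁ C₂ p₁ p₂, g.IsCycle C₁ p₁ ∧ g.IsCycle C₂ p₂ ∧
      (∃ d, 0 < C₁ d) ∧ (∃ d, 0 < C₂ d) ∧ (∀ d, C d = C₁ d + C₂ d)

/-- The Parikh image of the grammar. -/
def PsiSet (g : CGrammar S Q) : Set (S → ℤ) :=
  {v | ∃ R, g.IsRun R g.q0 ∧ g.parikh R = v}

end CGrammar

open CGrammar

namespace CGrammar

section Helpers

variable {S Q : Type} [Fintype S] [Fintype Q] [DecidableEq S] [DecidableEq Q]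

lemma srcCount_exists (g : CGrammar S Q) {R : CTrans S Q → ℕ} {q : Q}
    (h : 0 < g.srcCount R q) : ∃ e ∈ g.delta, 0 < R e ∧ e.src = q := by
  rw [CGrammar.srcCount] at h
  obtain ⟨e, he, hne⟩ := Finset.exists_ne_zero_of_sum_ne_zero h.ne'
  by_cases hs : e.src = q
  · exact ⟨e, he, Nat.pos_of_ne_zero (by simpa [hs] using hne), hs⟩
  · simp [hs] at hne

lemma tgtCount_exists (g : CGrammar S Q) {R : CTrans S Q → ℕ} {q : Q}
    (h : 0 < g.tgtCount R q) : ∃ e ∈ g.delta, 0 < R e ∧ 0 < e.tgt q := by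
  rw [CGrammar.tgtCount] at h
  obtain ⟨e, he, hne⟩ := Finset.exists_ne_zero_of_sum_ne_zero h.ne'
  rcases Nat.mul_ne_zero_iff.mp hne with ⟨h1, h2⟩
  exact ⟨e, he, Nat.pos_of_ne_zero h1, Nat.pos_of_ne_zero h2⟩

lemma le_srcCount (g : CGrammar S Q) {R : CTrans S Q → ℕ} {e : CTrans S Q}
    (he : e ∈ g.delta) : R e ≤ g.srcCount R e.src := by
  rw [CGrammar.srcCount]
  have := Finset.single_le_sum (f := fun d => if d.src = e.src then R d else 0)
    (fun i _ => Nat.zero_le _) he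
  simpa using this

lemma srcCount_mono (g : CGrammar S Q) {R R' : CTrans S Q → ℕ}
    (h : ∀ e, R' e ≤ R e) (q : Q) : g.srcCount R' q ≤ g.srcCount R q := by
  rw [CGrammar.srcCount, CGrammar.srcCount]
  refine Finset.sum_le_sum fun e _ => ?_
  by_cases hs : e.src = q <;> simp [hs, h e]

lemma srcCount_sub (g : CGrammar S Q) {R : CTrans S Q → ℕ} {d : CTrans S Q}
    (hd : d ∈ g.delta) (hRd : 0 < R d) (q : Q) :
    g.srcCount (fun e => R e - (if e = d then 1 else 0)) q
      + (if d.src = q then 1 else 0) = g.srcCount R q := by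
  rw [CGrammar.srcCount, CGrammar.srcCount]
  rw [show (if d.src = q then 1 else 0)
      = ∑ e ∈ g.delta, if e = d then (if e.src = q then 1 else 0) else 0 by
    rw [Finset.sum_ite_eq' g.delta d]; simp [hd]]
  rw [← Finset.sum_add_distrib]
  refine Finset.sum_congr rfl fun e _ => ?_
  by_cases hed : e = d
  · subst hed
    by_cases hs : e.src = q <;> simp [hs] <;> omega
  · simp [hed]

lemma tgtCount_sub (g : CGrammar S Q) {R : CTrans S Q → ℕ} {d : CTrans S Q}
    (hd : d ∈ g.delta) (hRd : 0 < R d) (q : Q) :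
    g.tgtCount (fun e => R e - (if e = d then 1 else 0)) q
      + d.tgt q = g.tgtCount R q := by
  rw [CGrammar.tgtCount, CGrammar.tgtCount]
  rw [show d.tgt q = ∑ e ∈ g.delta, if e = d then e.tgt q else 0 by
    rw [Finset.sum_ite_eq' g.delta d]; simp [hd]]
  rw [← Finset.sum_add_distrib]
  refine Finset.sum_congr rfl fun e _ => ?_
  by_cases hed : e = d
  · subst hed
    have h1 : (if e = e then 1 else 0) = 1 := if_pos rfl
    have h1' : (if e = e then e.tgt q else 0) = e.tgt q := if_pos rfl
    rw [h1, h1', Nat.sub_mul, one_mul]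
    have h2 : e.tgt q ≤ R e * e.tgt q := Nat.le_mul_of_pos_left _ hRd
    omega
  · simp [hed]

/-- positivity of the new start multiset on targets of `d`. -/
lemma ind_self (p : Q) : ind p p = 1 := by simp [CGrammar.ind]

lemma ind_ne {p q : Q} (h : q ≠ p) : ind p q = 0 := by simp [CGrammar.ind, h]

lemma snew_pos (g : CGrammar S Q) {s : Q → ℕ} {d : CTrans S Q}
    (hsd : 0 < s d.src) {y : Q} (hy : 0 < d.tgt y) :
    0 < s y - ind d.src y + d.tgt y := by
  by_cases h : y = d.src
  · subst h; simp only [CGrammar.ind, if_pos rfl]; omega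
  · simp only [CGrammar.ind, if_neg h]; omega

/-- The set of states reachable (via the reduced run) from the new start multiset
is closed under steps of the original run. -/
lemma reach_transfer (g : CGrammar S Q) {R : CTrans S Q → ℕ} {s : Q → ℕ}
    {d : CTrans S Q} (hsd : 0 < s d.src) {x q : Q}
    (hx : ∃ z, 0 < (s z - ind d.src z + d.tgt z) ∧
        Relation.ReflTransGen (g.Step fun e => R e - (if e = d then 1 else 0)) z x)
    (hp : Relation.ReflTransGen (g.Step R) x q) :
    ∃ z, 0 < (s z - ind d.src z + d.tgt z) ∧
        Relation.ReflTransGen (g.Step fun e => R e - (if e = d then 1 else 0)) z q := by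
  induction hp with
  | refl => exact hx
  | @tail b c h1 h2 ih =>
    obtain ⟨e, he, hRe, hsrc, htgt⟩ := h2
    by_cases hed : e = d
    · subst hed
      exact ⟨c, g.snew_pos hsd htgt, Relation.ReflTransGen.refl⟩
    · obtain ⟨z, hz, hzp⟩ := ih
      exact ⟨z, hz, hzp.tail ⟨e, he, by simpa [hed] using hRe, hsrc, htgt⟩⟩

/-- Key sufficient condition: removing one copy of `d` preserves the subrun property
provided either `d.src` stays reachable or `d.src` has no remaining outgoing transitions. -/
lemma key_subrun (g : CGrammar S Q) (R : CTrans S Q → ℕ) (s t : Q → ℕ)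
    (hR : g.IsSubrun R s t) (d : CTrans S Q) (hd : d ∈ g.delta) (hRd : 0 < R d)
    (hsd : 0 < s d.src)
    (hgood : (∃ z, 0 < (s z - ind d.src z + d.tgt z) ∧
        Relation.ReflTransGen (g.Step fun e => R e - (if e = d then 1 else 0)) z d.src)
      ∨ g.srcCount (fun e => R e - (if e = d then 1 else 0)) d.src = 0) :
    g.IsSubrun (fun e => R e - (if e = d then 1 else 0))
      (fun q => s q - ind d.src q + d.tgt q) t := by
  obtain ⟨hmem, hE, hconn⟩ := hR
  refine ⟨?_, ?_, ?_⟩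
  · intro e he
    exact hmem e (lt_of_lt_of_le he (Nat.sub_le _ _))
  · intro q
    have A1 := g.srcCount_sub hd hRd q
    have A2 := g.tgtCount_sub hd hRd q
    have hEq := hE q
    by_cases hq : q = d.src
    · subst hq
      rw [if_pos rfl] at A1
      simp only [CGrammar.ind_self]
      omega
    · have hq' : ¬ (d.src = q) := fun h => hq h.symm
      rw [if_neg hq'] at A1
      simp only [CGrammar.ind_ne hq]
      omega
  · intro q hq
    have hq' : 0 < g.srcCount R q :=
      lt_of_lt_of_le hq (g.srcCount_mono (fun e => Nat.sub_le _ _) q)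
    obtain ⟨x, hx, hpath⟩ := hconn q hq'
    by_cases hxd : x = d.src
    · subst hxd
      rcases hgood with ⟨z, hz, hzp⟩ | h0
      · exact g.reach_transfer hsd ⟨z, hz, hzp⟩ hpath
      · have hqne : q ≠ d.src := by
          rintro rfl; omega
        rcases hpath.cases_head with heq | ⟨y, hstep, hrest⟩
        · exact absurd heq.symm hqne
        · obtain ⟨e, he, hRe, hsrc, htgt⟩ := hstep
          have hed : e = d := by
            by_contra hne
            have h1 : R e - (if e = d then 1 else 0) ≤
                g.srcCount (fun e => R e - (if e = d then 1 else 0)) d.src := by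
              have := g.le_srcCount (R := fun e => R e - (if e = d then 1 else 0)) he
              rwa [hsrc] at this
            rw [h0] at h1
            simp [hne] at h1
            omega
          subst hed
          exact g.reach_transfer hsd ⟨y, g.snew_pos hsd htgt, Relation.ReflTransGen.refl⟩ hrest
    · have hxpos : 0 < s x - ind d.src x + d.tgt x := by
        simp only [CGrammar.ind, if_neg hxd]; omega
      exact g.reach_transfer hsd ⟨x, hxpos, Relation.ReflTransGen.refl⟩ hpath

end Helpers

end CGrammar

/-- From a nonempty commutative subrun from `s` to `t` one can extract a first
transition `d` with `R d > 0` and `s (src d) > 0` such that removing one copy of `d`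
leaves a subrun from `s - [src d] + tgt d` to `t`. -/
theorem subrun_first_transition {S Q : Type} [Fintype S] [Fintype Q]
    [DecidableEq S] [DecidableEq Q]
    (g : CGrammar S Q) (R : CTrans S Q → ℕ) (s t : Q → ℕ)
    (hR : g.IsSubrun R s t) (hne : ∃ d, 0 < R d) :
    ∃ d ∈ g.delta, 0 < R d ∧ 0 < s d.src ∧
      g.IsSubrun (fun e => R e - (if e = d then 1 else 0))
        (fun q => s q - ind d.src q + d.tgt q) t := by
  -- Step 1: find p ∈ supp s with positive outgoing count
  obtain ⟨e0, he0⟩ := hne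
  have he0d : e0 ∈ g.delta := hR.1 e0 he0
  have h1 : 0 < g.srcCount R e0.src := lt_of_lt_of_le he0 (g.le_srcCount he0d)
  obtain ⟨x0, hx0, hp0⟩ := hR.2.2 e0.src h1
  have hstep1 : ∃ p, 0 < s p ∧ 0 < g.srcCount R p := by
    rcases hp0.cases_head with heq | ⟨y, hstep, _⟩
    · exact ⟨x0, hx0, heq ▸ h1⟩
    · obtain ⟨e, he, hRe, hsrc, _⟩ := hstep
      refine ⟨x0, hx0, ?_⟩
      have := g.le_srcCount (R := R) he
      rw [hsrc] at this
      omega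
  obtain ⟨p, hsp, hout⟩ := hstep1
  obtain ⟨d0, hd0, hRd0, hsrc0⟩ := g.srcCount_exists hout
  -- Case split on the structure around p
  by_cases hself : ∃ e ∈ g.delta, 0 < R e ∧ e.src = p ∧ 0 < s p - 1 + e.tgt p
  · -- a candidate whose removal keeps p supported
    obtain ⟨d, hd, hRd, hdsrc, hdpos⟩ := hself
    have hsd' : 0 < s d.src := by rw [hdsrc]; exact hsp
    refine ⟨d, hd, hRd, hsd', ?_⟩
    refine g.key_subrun R s t hR d hd hRd hsd' (Or.inl ⟨d.src, ?_, .refl⟩)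
    simp only [CGrammar.ind_self]
    rw [hdsrc]
    omega
  · push_neg at hself
    have hsp1 : s p = 1 := by
      have := hself d0 hd0 hRd0 hsrc0
      omega
    have hd0tgt : d0.tgt p = 0 := by
      have := hself d0 hd0 hRd0 hsrc0
      omega
    by_cases hone : g.srcCount R p = 1
    · -- unique outgoing token: after removal p has no outgoing transitions
      have hsd0 : 0 < s d0.src := by rw [hsrc0]; exact hsp
      refine ⟨d0, hd0, hRd0, hsd0, ?_⟩
      refine g.key_subrun R s t hR d0 hd0 hRd0 hsd0 (Or.inr ?_)
      have A1 := g.srcCount_sub hd0 hRd0 p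
      rw [if_pos hsrc0] at A1
      rw [hsrc0]
      omega
    · -- at least two outgoing tokens: by Euler there is an incoming token
      have hout2 : 2 ≤ g.srcCount R p := by omega
      have htpos : 0 < g.tgtCount R p := by
        have := hR.2.1 p
        omega
      obtain ⟨f, hf, hRf, hftp⟩ := g.tgtCount_exists htpos
      have hfs : 0 < g.srcCount R f.src := lt_of_lt_of_le hRf (g.le_srcCount hf)
      obtain ⟨x, hsx, hxpath⟩ := hR.2.2 f.src hfs
      have hfstep : g.Step R f.src p := ⟨f, hf, hRf, rfl, hftp⟩
      have hpathp : Relation.ReflTransGen (g.Step R) x p := hxpath.tail hfstep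
      by_cases hxp : x = p
      · -- a cycle through p: remove its first transition
        have hfsrc : f.src ≠ p := by
          intro h
          have := hself f hf hRf h
          omega
        rcases hxpath.cases_head with heq | ⟨y, hstep, hrest⟩
        · exact absurd (hxp.symm.trans heq).symm hfsrc
        · obtain ⟨d, hd, hRd, hdsrc, hdtgt⟩ := hstep
          have hdp : d.src = p := hdsrc.trans hxp
          have hsd' : 0 < s d.src := by rw [hdp]; exact hsp
          refine ⟨d, hd, hRd, hsd', ?_⟩
          refine g.key_subrun R s t hR d hd hRd hsd' (Or.inl ?_)
          have hpath2 : Relation.ReflTransGen (g.Step R) y d.src := by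
            rw [hdp]; exact hrest.tail hfstep
          exact g.reach_transfer hsd'
            ⟨y, g.snew_pos hsd' hdtgt, Relation.ReflTransGen.refl⟩ hpath2
      · -- p is reachable from another supported state
        have hsd0 : 0 < s d0.src := by rw [hsrc0]; exact hsp
        refine ⟨d0, hd0, hRd0, hsd0, ?_⟩
        refine g.key_subrun R s t hR d0 hd0 hRd0 hsd0 (Or.inl ?_)
        have hxpos : 0 < s x - ind d0.src x + d0.tgt x := by
          have hxne : x ≠ d0.src := by rw [hsrc0]; exact hxp
          rw [CGrammar.ind_ne hxne]
          omega
        have hpathp' : Relation.ReflTransGen (g.Step R) x d0.src := by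
          rw [hsrc0]; exact hpathp
        exact g.reach_transfer hsd0
          ⟨x, hxpos, Relation.ReflTransGen.refl⟩ hpathp'
end

section
/- Every nonempty commutative subrun from s to t can be linearized: there is an ordering d₁, d₂, …, d_m of the transitions of R (with multiplicity) such that, setting s₀ = s and s_{i} = s_{i-1} − [source(d_i)] + target(d_i), one has source(d_i) ∈ supp(s_{i-1}) for all i, and s_m = t. -/
open CGrammar

namespace SubrunAux

open CGrammar

variable {S Q : Type} [Fintype S] [Fintype Q] [DecidableEq S] [DecidableEq Q]

/-- Remove one copy of transition `d` from `R`. -/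
def rem (R : CTrans S Q → ℕ) (d : CTrans S Q) : CTrans S Q → ℕ :=
  fun e => R e - if e = d then 1 else 0

/-- The state after firing `d` from `s`. -/
def nxt (s : Q → ℕ) (d : CTrans S Q) : Q → ℕ :=
  fun q => s q - ind d.src q + d.tgt q

lemma rem_le (R : CTrans S Q → ℕ) (d e : CTrans S Q) : rem R d e ≤ R e := by
  unfold rem; split <;> omega

lemma srcCount_pos_iff (g : CGrammar S Q) (R : CTrans S Q → ℕ) (q : Q) :
    0 < g.srcCount R q ↔ ∃ d ∈ g.delta, d.src = q ∧ 0 < R d := by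
  rw [srcCount, Nat.pos_iff_ne_zero, Ne, Finset.sum_eq_zero_iff]
  constructor
  · intro h
    push_neg at h
    obtain ⟨d, hd, hd0⟩ := h
    refine ⟨d, hd, ?_, ?_⟩ <;> by_contra hc <;> simp [hc] at hd0 <;> omega
  · rintro ⟨d, hd, h1, h2⟩ h
    have := h d hd
    simp [h1] at this
    omega

lemma tgtCount_pos_iff (g : CGrammar S Q) (R : CTrans S Q → ℕ) (q : Q) :
    0 < g.tgtCount R q ↔ ∃ d ∈ g.delta, 0 < R d ∧ 0 < d.tgt q := by
  rw [tgtCount, Nat.pos_iff_ne_zero, Ne, Finset.sum_eq_zero_iff]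
  constructor
  · intro h
    push_neg at h
    obtain ⟨d, hd, hd0⟩ := h
    rw [Nat.mul_ne_zero_iff] at hd0
    exact ⟨d, hd, Nat.pos_of_ne_zero hd0.1, Nat.pos_of_ne_zero hd0.2⟩
  · rintro ⟨d, hd, h1, h2⟩ h
    have := h d hd
    rcases Nat.mul_eq_zero.1 this with h' | h' <;> omega

lemma srcCount_rem (g : CGrammar S Q) (R : CTrans S Q → ℕ) (d : CTrans S Q)
    (hd : d ∈ g.delta) (hRd : 0 < R d) (q : Q) :
    g.srcCount R q = g.srcCount (rem R d) q + if d.src = q then 1 else 0 := by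
  unfold srcCount
  have hone : (if d.src = q then 1 else 0) =
      ∑ e ∈ g.delta, if e = d then (if e.src = q then 1 else 0) else 0 := by
    rw [Finset.sum_eq_single_of_mem d hd]
    · simp
    · intro e he hne; simp [hne]
  rw [hone, ← Finset.sum_add_distrib]
  apply Finset.sum_congr rfl
  intro e he
  by_cases h1 : e = d
  · subst h1
    by_cases h2 : e.src = q <;> simp [rem, h2] <;> omega
  · by_cases h2 : e.src = q <;> simp [rem, h1, h2]

lemma tgtCount_rem (g : CGrammar S Q) (R : CTrans S Q → ℕ) (d : CTrans S Q)
    (hd : d ∈ g.delta) (hRd : 0 < R d) (q : Q) :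
    g.tgtCount R q = g.tgtCount (rem R d) q + d.tgt q := by
  unfold tgtCount
  have : d.tgt q = ∑ e ∈ g.delta, (if e = d then 1 else 0) * e.tgt q := by
    rw [Finset.sum_eq_single_of_mem d hd]
    · simp
    · intro e he hne; simp [hne]
  rw [this, ← Finset.sum_add_distrib]
  apply Finset.sum_congr rfl
  intro e he
  by_cases h1 : e = d
  · subst h1
    simp only [rem, if_pos rfl, one_mul]
    conv_lhs => rw [show R e = (R e - 1) + 1 from by omega]
    rw [Nat.add_mul, one_mul]
    simp
  · simp [rem, h1]

lemma size_rem (g : CGrammar S Q) (R : CTrans S Q → ℕ) (d : CTrans S Q)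
    (hd : d ∈ g.delta) (hRd : 0 < R d) :
    g.size R = g.size (rem R d) + 1 := by
  unfold size
  have : (1 : ℕ) = ∑ e ∈ g.delta, if e = d then 1 else 0 := by
    rw [Finset.sum_eq_single_of_mem d hd]
    · simp
    · intro e he hne; simp [hne]
  rw [this, ← Finset.sum_add_distrib]
  apply Finset.sum_congr rfl
  intro e he
  by_cases h1 : e = d <;> simp [rem, h1] <;> omega

lemma step_rem (g : CGrammar S Q) (R : CTrans S Q → ℕ) (d : CTrans S Q) {x y : Q}
    (h : g.Step (rem R d) x y) : g.Step R x y := by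
  obtain ⟨e, he, h1, h2, h3⟩ := h
  exact ⟨e, he, lt_of_lt_of_le h1 (rem_le R d e), h2, h3⟩

/-- Repair lemma: a `Step R` path either survives removal of `d`, or its suffix
after the last use of `d` starts at a target of `d`. -/
lemma reach_rem (g : CGrammar S Q) (R : CTrans S Q → ℕ) (d : CTrans S Q) {x q : Q}
    (h : Relation.ReflTransGen (g.Step R) x q) :
    Relation.ReflTransGen (g.Step (rem R d)) x q ∨
      ∃ y, 0 < d.tgt y ∧ Relation.ReflTransGen (g.Step (rem R d)) y q := by
  induction h using Relation.ReflTransGen.head_induction_on with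
  | refl => exact Or.inl Relation.ReflTransGen.refl
  | head hstep htail ih =>
    rename_i a c
    obtain ⟨e, he, h1, h2, h3⟩ := hstep
    by_cases hre : 0 < rem R d e
    · rcases ih with ih | ⟨y, hy1, hy2⟩
      · exact Or.inl (Relation.ReflTransGen.head ⟨e, he, hre, h2, h3⟩ ih)
      · exact Or.inr ⟨y, hy1, hy2⟩
    · have hed : e = d := by
        by_contra hc
        simp [rem, hc] at hre
        omega
      rcases ih with ih | ⟨y, hy1, hy2⟩
      · exact Or.inr ⟨c, hed ▸ h3, ih⟩
      · exact Or.inr ⟨y, hy1, hy2⟩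

/-- A path to `d.src` survives removal of `d` (cut it at the first arrival). -/
lemma reach_to_src (g : CGrammar S Q) (R : CTrans S Q → ℕ) (d : CTrans S Q) {x : Q}
    (h : Relation.ReflTransGen (g.Step R) x d.src) :
    Relation.ReflTransGen (g.Step (rem R d)) x d.src := by
  induction h using Relation.ReflTransGen.head_induction_on with
  | refl => exact Relation.ReflTransGen.refl
  | head hstep htail ih =>
    rename_i a c
    obtain ⟨e, he, h1, h2, h3⟩ := hstep
    by_cases hre : 0 < rem R d e
    · exact Relation.ReflTransGen.head ⟨e, he, hre, h2, h3⟩ ih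
    · have hed : e = d := by
        by_contra hc
        simp [rem, hc] at hre
        omega
      have : a = d.src := by rw [← h2, hed]
      rw [this]

lemma nxt_ge_tgt (s : Q → ℕ) (d : CTrans S Q) (q : Q) : d.tgt q ≤ nxt s d q := by
  unfold nxt; omega

lemma nxt_other (s : Q → ℕ) (d : CTrans S Q) (q : Q) (h : q ≠ d.src) :
    s q ≤ nxt s d q := by
  unfold nxt ind; simp [h]

/-- Given a suitable hypothesis `H`, removing `d` leaves a subrun. -/
lemma finish (g : CGrammar S Q) (R : CTrans S Q → ℕ) (s t : Q → ℕ)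
    (hR : g.IsSubrun R s t) (d : CTrans S Q)
    (hd : d ∈ g.delta) (hRd : 0 < R d) (hps : 0 < s d.src)
    (H : 0 < nxt s d d.src ∨
      (∃ y, 0 < nxt s d y ∧ Relation.ReflTransGen (g.Step (rem R d)) y d.src) ∨
      g.srcCount (rem R d) d.src = 0) :
    g.IsSubrun (rem R d) (nxt s d) t := by
  obtain ⟨hsupp, heul, hcon⟩ := hR
  refine ⟨fun e h1 => hsupp e (lt_of_lt_of_le h1 (rem_le R d e)), ?_, ?_⟩
  · intro q
    have e1 := heul q
    have e2 := srcCount_rem g R d hd hRd q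
    have e3 := tgtCount_rem g R d hd hRd q
    have e4 : nxt s d q = s q - ind d.src q + d.tgt q := rfl
    have e5 : ind d.src q = if d.src = q then 1 else 0 := by
      unfold ind; by_cases h : q = d.src <;> simp [h] <;> simp [Ne.symm h]
    rw [e4, e5]
    by_cases h : d.src = q
    · subst h; simp at e2 e5 ⊢; omega
    · simp [h] at e2 e5 ⊢; omega
  · intro q hq
    have hq' : 0 < g.srcCount R q := by
      rw [srcCount_pos_iff] at hq ⊢
      obtain ⟨e, he, h1, h2⟩ := hq
      exact ⟨e, he, h1, lt_of_lt_of_le h2 (rem_le R d e)⟩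
    obtain ⟨x, hx, hpath⟩ := hcon q hq'
    rcases reach_rem g R d hpath with hpath' | ⟨y, hy1, hy2⟩
    · by_cases hxp : x = d.src
      · subst hxp
        rcases H with H | ⟨y, hy1, hy2⟩ | H
        · exact ⟨d.src, H, hpath'⟩
        · exact ⟨y, hy1, hy2.trans hpath'⟩
        · exfalso
          rcases hpath'.cases_head with heq | ⟨c, hstep, _⟩
          · rw [← heq] at hq; omega
          · obtain ⟨e, he, h1, h2, h3⟩ := hstep
            have : 0 < g.srcCount (rem R d) d.src :=
              (srcCount_pos_iff g (rem R d) d.src).2 ⟨e, he, h2, h1⟩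
            omega
      · exact ⟨x, lt_of_lt_of_le hx (nxt_other s d x hxp), hpath'⟩
    · exact ⟨y, lt_of_lt_of_le hy1 (nxt_ge_tgt s d y), hy2⟩

/-- Single-step extraction: a nonempty subrun contains a transition whose source
is available and whose removal leaves a subrun. -/
lemma extract (g : CGrammar S Q) (R : CTrans S Q → ℕ) (s t : Q → ℕ)
    (hR : g.IsSubrun R s t) (hne : ∃ d, 0 < R d) :
    ∃ d, d ∈ g.delta ∧ 0 < R d ∧ 0 < s d.src ∧
      g.IsSubrun (rem R d) (nxt s d) t := by
  obtain ⟨hsupp, heul, hcon⟩ := hR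
  obtain ⟨d₀, hd₀⟩ := hne
  have hd₀δ := hsupp d₀ hd₀
  have hsrc₀ : 0 < g.srcCount R d₀.src :=
    (srcCount_pos_iff g R d₀.src).2 ⟨d₀, hd₀δ, rfl, hd₀⟩
  obtain ⟨p, hps, hppath⟩ := hcon _ hsrc₀
  have hp : 0 < g.srcCount R p := by
    rcases hppath.cases_head with heq | ⟨c, hstep, _⟩
    · rw [heq]; exact hsrc₀
    · obtain ⟨e, he, h1, h2, h3⟩ := hstep
      exact (srcCount_pos_iff g R p).2 ⟨e, he, h2, h1⟩
  have hRsub : g.IsSubrun R s t := ⟨hsupp, heul, hcon⟩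
  by_cases h1 : 2 ≤ s p
  · obtain ⟨d, hdδ, hdp, hRd⟩ := (srcCount_pos_iff g R p).1 hp
    refine ⟨d, hdδ, hRd, hdp ▸ (by omega), ?_⟩
    apply finish g R s t hRsub d hdδ hRd (hdp ▸ (by omega))
    left
    have : ind d.src d.src = 1 := by simp [ind]
    unfold nxt
    rw [this, hdp]
    omega
  · by_cases h2 : ∃ x, x ≠ p ∧ 0 < s x ∧ Relation.ReflTransGen (g.Step R) x p
    · obtain ⟨x, hxp, hxs, hxpath⟩ := h2
      obtain ⟨d, hdδ, hdp, hRd⟩ := (srcCount_pos_iff g R p).1 hp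
      refine ⟨d, hdδ, hRd, hdp ▸ hps, ?_⟩
      apply finish g R s t hRsub d hdδ hRd (hdp ▸ hps)
      right; left
      refine ⟨x, lt_of_lt_of_le hxs (nxt_other s d x (hdp ▸ hxp)), ?_⟩
      exact reach_to_src g R d (hdp ▸ hxpath)
    · by_cases h3 : ∃ d, d ∈ g.delta ∧ 0 < R d ∧ d.src = p ∧
        ∃ y, 0 < d.tgt y ∧ Relation.ReflTransGen (g.Step R) y p
      · obtain ⟨d, hdδ, hRd, hdp, y, hy1, hy2⟩ := h3
        refine ⟨d, hdδ, hRd, hdp ▸ hps, ?_⟩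
        apply finish g R s t hRsub d hdδ hRd (hdp ▸ hps)
        right; left
        refine ⟨y, lt_of_lt_of_le hy1 (nxt_ge_tgt s d y), ?_⟩
        exact reach_to_src g R d (hdp ▸ hy2)
      · -- last case: s p = 1, nothing comes back to p, so srcCount R p = 1
        have hsp1 : s p = 1 := by omega
        have htc : g.tgtCount R p = 0 := by
          by_contra hc
          have htc' : 0 < g.tgtCount R p := by omega
          obtain ⟨e, heδ, he1, he2⟩ := (tgtCount_pos_iff g R p).1 htc'
          have hstep : g.Step R e.src p := ⟨e, heδ, he1, rfl, he2⟩
          have hesrc : 0 < g.srcCount R e.src :=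
            (srcCount_pos_iff g R e.src).2 ⟨e, heδ, rfl, he1⟩
          obtain ⟨x, hxs, hxpath⟩ := hcon _ hesrc
          have hxp : Relation.ReflTransGen (g.Step R) x p := hxpath.tail hstep
          have hxeq : x = p := by
            by_contra hc2
            exact h2 ⟨x, hc2, hxs, hxp⟩
          rw [hxeq] at hxpath
          rcases hxpath.cases_head with heq | ⟨c, hstep2, hcpath⟩
          · exact h3 ⟨e, heδ, he1, heq.symm, p, he2, Relation.ReflTransGen.refl⟩
          · obtain ⟨f, hfδ, hf1, hf2, hf3⟩ := hstep2
            exact h3 ⟨f, hfδ, hf1, hf2, c, hf3, hcpath.tail hstep⟩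
        have hsc1 : g.srcCount R p = 1 := by
          have := heul p
          omega
        obtain ⟨d, hdδ, hdp, hRd⟩ := (srcCount_pos_iff g R p).1 hp
        refine ⟨d, hdδ, hRd, hdp ▸ hps, ?_⟩
        apply finish g R s t hRsub d hdδ hRd (hdp ▸ hps)
        right; right
        have := srcCount_rem g R d hdδ hRd p
        rw [hdp] at this ⊢
        simp at this
        omega


lemma base (g : CGrammar S Q) (R : CTrans S Q → ℕ) (s t : Q → ℕ)
    (hR : g.IsSubrun R s t) (hz : ∀ d, R d = 0) :
    ∃ (m : ℕ) (seq : Fin m → CTrans S Q) (st : ℕ → Q → ℕ),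
      st 0 = s ∧ st m = t ∧
      (∀ d, R d = (Finset.univ.filter fun i : Fin m => seq i = d).card) ∧
      ∀ i : Fin m,
        0 < st i (seq i).src ∧
        (∀ q, st (i + 1) q = st i q - ind (seq i).src q + (seq i).tgt q) := by
  refine ⟨0, Fin.elim0, fun _ => s, rfl, ?_, ?_, fun i => i.elim0⟩
  · funext q
    have heul := hR.2.1 q
    have h1 : g.srcCount R q = 0 := by
      apply Finset.sum_eq_zero; intro e _; simp [hz]
    have h2 : g.tgtCount R q = 0 := by
      apply Finset.sum_eq_zero; intro e _; simp [hz]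
    rw [h1, h2] at heul
    show s q = t q
    omega
  · intro e
    rw [hz e]
    symm
    simp

/-- The linearization, by strong induction on size. -/
lemma main (g : CGrammar S Q) : ∀ (n : ℕ) (R : CTrans S Q → ℕ) (s t : Q → ℕ),
    g.size R ≤ n → g.IsSubrun R s t →
    ∃ (m : ℕ) (seq : Fin m → CTrans S Q) (st : ℕ → Q → ℕ),
      st 0 = s ∧ st m = t ∧
      (∀ d, R d = (Finset.univ.filter fun i : Fin m => seq i = d).card) ∧
      ∀ i : Fin m,
        0 < st i (seq i).src ∧
        (∀ q, st (i + 1) q = st i q - ind (seq i).src q + (seq i).tgt q) := by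
  intro n
  induction n with
  | zero =>
    intro R s t hsz hR
    apply base g R s t hR
    intro d
    by_contra hc
    have hd : 0 < R d := by omega
    have hδ := hR.1 d hd
    have : R d ≤ g.size R := Finset.single_le_sum (f := R) (fun _ _ => Nat.zero_le _) hδ
    omega
  | succ n ih =>
    intro R s t hsz hR
    by_cases hne : ∃ d, 0 < R d
    · obtain ⟨d, hdδ, hRd, hsd, hsub⟩ := extract g R s t hR hne
      have hsz' : g.size (rem R d) ≤ n := by
        have := size_rem g R d hdδ hRd
        omega
      obtain ⟨m, seq, st, hst0, hstm, hcount, hstep⟩ := ih (rem R d) (nxt s d) t hsz' hsub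
      refine ⟨m + 1, Fin.cons d seq, fun k => if k = 0 then s else st (k - 1), by simp, ?_, ?_, ?_⟩
      · simp [hstm]
      · intro e
        have hsplit : R e = (if d = e then 1 else 0) + rem R d e := by
          unfold rem
          by_cases h : e = d
          · subst h; simp; omega
          · simp [h, Ne.symm h]
        rw [hsplit, hcount e, Finset.card_filter, Finset.card_filter, Fin.sum_univ_succ]
        simp [Fin.cons_succ]
      · intro i
        refine Fin.cases ?_ ?_ i
        · constructor
          · simpa using hsd
          · intro q
            simp [hst0]
            rfl
        · intro j
          have hj := hstep j
          constructor
          · simpa [Fin.cons_succ, Fin.val_succ] using hj.1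
          · intro q
            simpa [Fin.cons_succ, Fin.val_succ] using hj.2 q
    · apply base g R s t hR
      intro d
      by_contra hc
      exact hne ⟨d, by omega⟩


end SubrunAux



/-- Every nonempty commutative subrun from `s` to `t` can be linearized: the
transitions of `R` (with multiplicity) can be ordered `d₁, …, d_m` so that,
starting from `s₀ = s` and setting `sᵢ = sᵢ₋₁ - [src dᵢ] + tgt dᵢ`, the source of
each `dᵢ` is available in `sᵢ₋₁`, and the final state is `t`. -/
theorem subrun_linearization {S Q : Type} [Fintype S] [Fintype Q]
    [DecidableEq S] [DecidableEq Q]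
    (g : CGrammar S Q) (R : CTrans S Q → ℕ) (s t : Q → ℕ)
    (hR : g.IsSubrun R s t) (hne : ∃ d, 0 < R d) :
    ∃ (m : ℕ) (seq : Fin m → CTrans S Q) (st : ℕ → Q → ℕ),
      st 0 = s ∧ st m = t ∧
      (∀ d, R d = (Finset.univ.filter fun i : Fin m => seq i = d).card) ∧
      ∀ i : Fin m,
        0 < st i (seq i).src ∧
        (∀ q, st (i + 1) q = st i q - ind (seq i).src q + (seq i).tgt q) := by
  exact SubrunAux.main g (g.size R) R s t le_rfl hR
end

section
/- The universality problem for commutative regular grammars over a one-letter alphabet (given regular G over {a}, decide Ψ(G) = ℕ) is coNP-hard, by reduction from 3CNF-SAT using cycles of distinct prime lengths: for a 3CNF formula φ with n variables and primes p₁,…,p_n, there is a polynomial-size regular grammar G such that x ∉ Ψ(G) iff φ is satisfied by the assignment x_i = x mod p_i. -/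
open CGrammar

namespace Red

variable {n m : ℕ} (Cl : Fin m → Fin 3 → Fin n × Bool) (p : Fin n → ℕ)

/-- Block size. -/
def BB : ℕ := ((∑ i, p i) + 2) ^ 3

lemma BB_pos : 0 < BB p := by rw [BB]; positivity

/-- Cycle length for clause `j`. -/
def Mc (j : Fin m) : ℕ := p (Cl j 0).1 * (p (Cl j 1).1 * p (Cl j 2).1)

lemma Mc_pos (hp : ∀ i, 2 ≤ p i) (j : Fin m) : 0 < Mc Cl p j := by
  have h0 := hp (Cl j 0).1; have h1 := hp (Cl j 1).1; have h2 := hp (Cl j 2).1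
  have : 0 < p (Cl j 0).1 * (p (Cl j 1).1 * p (Cl j 2).1) :=
    Nat.mul_pos (by omega) (Nat.mul_pos (by omega) (by omega))
  exact this

lemma Mc_le_BB (j : Fin m) : Mc Cl p j ≤ BB p := by
  have key : ∀ a : Fin n, p a ≤ (∑ i, p i) + 2 := by
    intro a
    have := Finset.single_le_sum (f := p) (fun i _ => Nat.zero_le _) (Finset.mem_univ a)
    omega
  have : Mc Cl p j ≤ ((∑ i, p i) + 2) * (((∑ i, p i) + 2) * ((∑ i, p i) + 2)) :=
    Nat.mul_le_mul (key _) (Nat.mul_le_mul (key _) (key _))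
  calc Mc Cl p j ≤ _ := this
    _ = BB p := by rw [BB]; ring

/-- State `i` on the cycle of clause `j`. -/
def stt (j : Fin m) (i : ℕ) : Fin (m * BB p + 1) :=
  ⟨1 + j.1 * BB p + i % BB p, by
    have hB := BB_pos p
    have hmod : i % BB p < BB p := Nat.mod_lt _ hB
    have h2 : j.1 * BB p + BB p ≤ m * BB p := by
      have := Nat.mul_le_mul_right (BB p) j.isLt
      rwa [Nat.succ_mul] at this
    omega⟩

lemma stt_val {j : Fin m} {i : ℕ} (hi : i < BB p) :
    (stt p j i : ℕ) = 1 + j.1 * BB p + i := by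
  simp [stt, Nat.mod_eq_of_lt hi]

lemma stt_ne_zero {j : Fin m} {i : ℕ} : (stt p j i : ℕ) ≠ 0 := by
  simp [stt]

lemma stt_inj {j j' : Fin m} {i i' : ℕ} (hi : i < BB p) (hi' : i' < BB p)
    (h : stt p j i = stt p j' i') : j = j' ∧ i = i' := by
  have hv : 1 + j.1 * BB p + i = 1 + j'.1 * BB p + i' := by
    have := congrArg (fun q : Fin (m * BB p + 1) => (q : ℕ)) h
    simpa [stt_val p hi, stt_val p hi'] using this
  have hv2 : j.1 * BB p + i = j'.1 * BB p + i' := by omega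
  have hd : j.1 = j'.1 := by
    have h1 : (j.1 * BB p + i) / BB p = j.1 := by
      rw [Nat.add_comm, Nat.add_mul_div_right _ _ (BB_pos p), Nat.div_eq_of_lt hi]; omega
    have h2 : (j'.1 * BB p + i') / BB p = j'.1 := by
      rw [Nat.add_comm, Nat.add_mul_div_right _ _ (BB_pos p), Nat.div_eq_of_lt hi']; omega
    rw [← h1, ← h2, hv2]
  refine ⟨Fin.ext hd, ?_⟩
  rw [hd] at hv2; omega

/-- Start state. -/
def q0' : Fin (m * BB p + 1) := ⟨0, by omega⟩

lemma stt_ne_q0' {j : Fin m} {i : ℕ} : stt p j i ≠ q0' p := by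
  intro h
  exact stt_ne_zero p (congrArg (fun q : Fin (m * BB p + 1) => (q : ℕ)) h)

/-- Branch edge. -/
def bE (j : Fin m) : CTrans (Fin 1) (Fin (m * BB p + 1)) :=
  ⟨q0' p, fun _ => 0, ind (stt p j 0)⟩

/-- Cycle edge. -/
def cE (x : Fin m × ℕ) : CTrans (Fin 1) (Fin (m * BB p + 1)) :=
  ⟨stt p x.1 x.2, fun _ => 1, ind (stt p x.1 ((x.2 + 1) % Mc Cl p x.1))⟩

/-- Terminating edge. -/
def tE (x : Fin m × ℕ) : CTrans (Fin 1) (Fin (m * BB p + 1)) :=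
  ⟨stt p x.1 x.2, fun _ => 0, fun _ => 0⟩

/-- `i` falsifies clause `j`. -/
def fals (j : Fin m) (i : ℕ) : Prop :=
  ∀ t : Fin 3, i % p (Cl j t).1 ≠ (if (Cl j t).2 then 1 else 0)

instance (j : Fin m) (i : ℕ) : Decidable (fals Cl p j i) := by
  unfold fals; infer_instance

def cycIdx : Finset (Fin m × ℕ) :=
  (Finset.univ ×ˢ Finset.range (BB p)).filter fun x => x.2 < Mc Cl p x.1

def termIdx : Finset (Fin m × ℕ) :=
  (cycIdx Cl p).filter fun x => fals Cl p x.1 x.2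

lemma mem_cycIdx {x : Fin m × ℕ} : x ∈ cycIdx Cl p ↔ x.2 < Mc Cl p x.1 := by
  constructor
  · intro h; exact (Finset.mem_filter.1 h).2
  · intro h
    refine Finset.mem_filter.2 ⟨Finset.mem_product.2 ⟨Finset.mem_univ _, ?_⟩, h⟩
    exact Finset.mem_range.2 (lt_of_lt_of_le h (Mc_le_BB Cl p x.1))

lemma mem_termIdx {x : Fin m × ℕ} :
    x ∈ termIdx Cl p ↔ x.2 < Mc Cl p x.1 ∧ fals Cl p x.1 x.2 := by
  rw [termIdx, Finset.mem_filter, mem_cycIdx]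

def delta : Finset (CTrans (Fin 1) (Fin (m * BB p + 1))) :=
  (Finset.univ.image (bE p)) ∪ ((cycIdx Cl p).image (cE Cl p)) ∪
    ((termIdx Cl p).image (tE p))

def gr : CGrammar (Fin 1) (Fin (m * BB p + 1)) := ⟨q0' p, delta Cl p⟩

lemma bE_ne_cE {j : Fin m} {x : Fin m × ℕ} : bE p j ≠ cE Cl p x := by
  intro h
  have := congrArg CTrans.src h
  exact stt_ne_q0' p (by simpa [bE, cE] using this.symm)

lemma bE_ne_tE {j : Fin m} {x : Fin m × ℕ} : bE p j ≠ tE p x := by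
  intro h
  have := congrArg CTrans.src h
  exact stt_ne_q0' p (by simpa [bE, tE] using this.symm)

lemma cE_ne_tE {x y : Fin m × ℕ} : cE Cl p x ≠ tE p y := by
  intro h
  have := congrFun (congrArg CTrans.out h) 0
  simp [cE, tE] at this

lemma ind_inj {Q : Type} [DecidableEq Q] {a b : Q} (h : ind a = ind b) : a = b := by
  have := congrFun h a
  simp [ind] at this
  by_contra hne
  exact hne this

lemma bE_inj {j j' : Fin m} (h : bE p j = bE p j') : j = j' := by
  have := congrArg CTrans.tgt h
  simp only [bE] at this
  exact (stt_inj p (BB_pos p) (BB_pos p) (ind_inj this)).1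

lemma cE_inj {x y : Fin m × ℕ} (hx : x.2 < Mc Cl p x.1) (hy : y.2 < Mc Cl p y.1)
    (h : cE Cl p x = cE Cl p y) : x = y := by
  have := congrArg CTrans.src h
  simp only [cE] at this
  obtain ⟨h1, h2⟩ := stt_inj p (lt_of_lt_of_le hx (Mc_le_BB Cl p _))
    (lt_of_lt_of_le hy (Mc_le_BB Cl p _)) this
  exact Prod.ext h1 h2

lemma tE_inj {x y : Fin m × ℕ} (hx : x.2 < Mc Cl p x.1) (hy : y.2 < Mc Cl p y.1)
    (h : tE p x = tE p y) : x = y := by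
  have := congrArg CTrans.src h
  simp only [tE] at this
  obtain ⟨h1, h2⟩ := stt_inj p (lt_of_lt_of_le hx (Mc_le_BB Cl p _))
    (lt_of_lt_of_le hy (Mc_le_BB Cl p _)) this
  exact Prod.ext h1 h2

lemma sum_delta {β : Type} [AddCommMonoid β] (F : CTrans (Fin 1) (Fin (m * BB p + 1)) → β) :
    ∑ d ∈ delta Cl p, F d =
      (∑ j, F (bE p j)) + (∑ x ∈ cycIdx Cl p, F (cE Cl p x)) +
        (∑ x ∈ termIdx Cl p, F (tE p x)) := by
  have hd1 : Disjoint (Finset.univ.image (bE p)) ((cycIdx Cl p).image (cE Cl p)) := by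
    rw [Finset.disjoint_left]
    rintro d hd1 hd2
    obtain ⟨j, _, rfl⟩ := Finset.mem_image.1 hd1
    obtain ⟨x, _, hx⟩ := Finset.mem_image.1 hd2
    exact bE_ne_cE Cl p hx.symm
  have hd2 : Disjoint ((Finset.univ.image (bE p)) ∪ ((cycIdx Cl p).image (cE Cl p)))
      ((termIdx Cl p).image (tE p)) := by
    rw [Finset.disjoint_left]
    rintro d hd1 hd2
    obtain ⟨x, _, hx⟩ := Finset.mem_image.1 hd2
    rcases Finset.mem_union.1 hd1 with h | h
    · obtain ⟨j, _, rfl⟩ := Finset.mem_image.1 h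
      exact bE_ne_tE p hx.symm
    · obtain ⟨y, _, rfl⟩ := Finset.mem_image.1 h
      exact cE_ne_tE Cl p hx.symm
  rw [delta, Finset.sum_union hd2, Finset.sum_union hd1]
  congr 1
  · congr 1
    · exact Finset.sum_image (fun j _ j' _ h => bE_inj p h)
    · exact Finset.sum_image (fun x hx y hy h =>
        cE_inj Cl p ((mem_cycIdx Cl p).1 hx) ((mem_cycIdx Cl p).1 hy) h)
  · exact Finset.sum_image (fun x hx y hy h =>
      tE_inj Cl p ((mem_termIdx Cl p).1 hx).1 ((mem_termIdx Cl p).1 hy).1 h)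

lemma sum_cycIdx {β : Type} [AddCommMonoid β] (f : Fin m × ℕ → β) :
    ∑ x ∈ cycIdx Cl p, f x = ∑ j, ∑ i ∈ Finset.range (Mc Cl p j), f (j, i) := by
  rw [cycIdx, Finset.sum_filter, Finset.sum_product]
  refine Finset.sum_congr rfl fun j _ => ?_
  rw [← Finset.sum_filter]
  refine Finset.sum_congr ?_ fun _ _ => rfl
  ext i
  simp only [Finset.mem_filter, Finset.mem_range]
  have := Mc_le_BB Cl p j
  omega

lemma prev_val {M i : ℕ} (hM : 0 < M) (hi : i < M) :
    (i + M - 1) % M = if i = 0 then M - 1 else i - 1 := by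
  by_cases h : i = 0
  · subst h; rw [if_pos rfl, Nat.zero_add]
    exact Nat.mod_eq_of_lt (by omega)
  · rw [if_neg h]
    have he : i + M - 1 = (i - 1) + M := by omega
    rw [he, Nat.add_mod_right]
    exact Nat.mod_eq_of_lt (by omega)

lemma prev_succ {M i : ℕ} (hM : 0 < M) (hi : i < M) :
    ((i + M - 1) % M + 1) % M = i := by
  rw [prev_val hM hi]
  by_cases h : i = 0
  · subst h; rw [if_pos rfl]
    have : M - 1 + 1 = M := by omega
    rw [this, Nat.mod_self]
  · rw [if_neg h]
    have : i - 1 + 1 = i := by omega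
    rw [this]
    exact Nat.mod_eq_of_lt hi

lemma succ_eq_iff {M i y : ℕ} (hM : 0 < M) (hi : i < M) (hy : y < M) :
    (y + 1) % M = i ↔ y = (i + M - 1) % M := by
  rw [prev_val hM hi]
  constructor
  · intro h
    rcases Nat.lt_or_ge (y + 1) M with hlt | hge
    · rw [Nat.mod_eq_of_lt hlt] at h
      have : i ≠ 0 := by omega
      rw [if_neg this]; omega
    · have hYM : y + 1 = M := by omega
      rw [hYM, Nat.mod_self] at h
      rw [if_pos h.symm]; omega
  · intro h
    subst h
    by_cases h0 : i = 0
    · subst h0; rw [if_pos rfl]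
      have : M - 1 + 1 = M := by omega
      rw [this, Nat.mod_self]
    · rw [if_neg h0]
      have : i - 1 + 1 = i := by omega
      rw [this]
      exact Nat.mod_eq_of_lt hi

lemma decode (q : Fin (m * BB p + 1)) :
    q = q0' p ∨ ∃ j : Fin m, ∃ i : ℕ, i < BB p ∧ q = stt p j i := by
  by_cases h0 : (q : ℕ) = 0
  · exact Or.inl (Fin.ext h0)
  · right
    have hq := q.isLt
    have hB := BB_pos p
    have hji : ((q : ℕ) - 1) / BB p < m := by
      rw [Nat.div_lt_iff_lt_mul hB]; omega
    refine ⟨⟨_, hji⟩, ((q : ℕ) - 1) % BB p, Nat.mod_lt _ hB, ?_⟩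
    apply Fin.ext
    rw [stt_val p (Nat.mod_lt _ hB)]
    have h := Nat.div_add_mod ((q : ℕ) - 1) (BB p)
    simp only []
    rw [Nat.mul_comm] at h
    omega

section Compute

variable (R : CTrans (Fin 1) (Fin (m * BB p + 1)) → ℕ)

lemma srcCount_q0 : (gr Cl p).srcCount R (q0' p) = ∑ j, R (bE p j) := by
  have h1 : ∀ j : Fin m, (if (bE p j).src = q0' p then R (bE p j) else 0) = R (bE p j) :=
    fun j => if_pos rfl
  have h2 : ∑ x ∈ cycIdx Cl p, (if (cE Cl p x).src = q0' p then R (cE Cl p x) else 0) = 0 :=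
    Finset.sum_eq_zero fun x _ => if_neg (stt_ne_q0' p)
  have h3 : ∑ x ∈ termIdx Cl p, (if (tE p x).src = q0' p then R (tE p x) else 0) = 0 :=
    Finset.sum_eq_zero fun x _ => if_neg (stt_ne_q0' p)
  show ∑ d ∈ delta Cl p, (if d.src = q0' p then R d else 0) = _
  rw [sum_delta Cl p (fun d => if d.src = q0' p then R d else 0), h2, h3,
    Finset.sum_congr rfl fun j _ => h1 j, add_zero, add_zero]

lemma srcCount_stt {j : Fin m} {i : ℕ} (hi : i < Mc Cl p j) :
    (gr Cl p).srcCount R (stt p j i) =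
      R (cE Cl p (j, i)) + (if fals Cl p j i then R (tE p (j, i)) else 0) := by
  have hiB := lt_of_lt_of_le hi (Mc_le_BB Cl p j)
  have h1 : ∑ j' : Fin m, (if (bE p j').src = stt p j i then R (bE p j') else 0) = 0 :=
    Finset.sum_eq_zero fun j' _ => if_neg fun h => stt_ne_q0' p h.symm
  have h2 : ∑ x ∈ cycIdx Cl p, (if (cE Cl p x).src = stt p j i then R (cE Cl p x) else 0)
      = R (cE Cl p (j, i)) := by
    rw [Finset.sum_eq_single_of_mem (j, i) ((mem_cycIdx Cl p).2 hi)
      (fun y hy hne => if_neg fun h => by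
        obtain ⟨ha, hb⟩ := stt_inj p
          (lt_of_lt_of_le ((mem_cycIdx Cl p).1 hy) (Mc_le_BB Cl p _)) hiB h
        exact hne (Prod.ext ha hb))]
    exact if_pos rfl
  have h3 : ∑ x ∈ termIdx Cl p, (if (tE p x).src = stt p j i then R (tE p x) else 0)
      = if fals Cl p j i then R (tE p (j, i)) else 0 := by
    by_cases hf : fals Cl p j i
    · rw [if_pos hf]
      rw [Finset.sum_eq_single_of_mem (j, i) ((mem_termIdx Cl p).2 ⟨hi, hf⟩)
        (fun y hy hne => if_neg fun h => by
          obtain ⟨ha, hb⟩ := stt_inj p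
            (lt_of_lt_of_le ((mem_termIdx Cl p).1 hy).1 (Mc_le_BB Cl p _)) hiB h
          exact hne (Prod.ext ha hb))]
      exact if_pos rfl
    · rw [if_neg hf]
      refine Finset.sum_eq_zero fun y hy => if_neg fun h => ?_
      obtain ⟨ha, hb⟩ := stt_inj p
        (lt_of_lt_of_le ((mem_termIdx Cl p).1 hy).1 (Mc_le_BB Cl p _)) hiB h
      apply hf
      have := ((mem_termIdx Cl p).1 hy).2
      rwa [ha, hb] at this
  show ∑ d ∈ delta Cl p, (if d.src = stt p j i then R d else 0) = _
  rw [sum_delta Cl p (fun d => if d.src = stt p j i then R d else 0), h1, h2, h3, zero_add]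

lemma srcCount_stt_dead {j : Fin m} {i : ℕ} (hi : Mc Cl p j ≤ i) (hiB : i < BB p) :
    (gr Cl p).srcCount R (stt p j i) = 0 := by
  have h1 : ∑ j' : Fin m, (if (bE p j').src = stt p j i then R (bE p j') else 0) = 0 :=
    Finset.sum_eq_zero fun j' _ => if_neg fun h => stt_ne_q0' p h.symm
  have key : ∀ y : Fin m × ℕ, y.2 < Mc Cl p y.1 → stt p y.1 y.2 ≠ stt p j i := by
    intro y hy h
    obtain ⟨ha, hb⟩ := stt_inj p (lt_of_lt_of_le hy (Mc_le_BB Cl p _)) hiB h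
    rw [ha, hb] at hy; omega
  have h2 : ∑ x ∈ cycIdx Cl p, (if (cE Cl p x).src = stt p j i then R (cE Cl p x) else 0) = 0 :=
    Finset.sum_eq_zero fun y hy => if_neg (key y ((mem_cycIdx Cl p).1 hy))
  have h3 : ∑ x ∈ termIdx Cl p, (if (tE p x).src = stt p j i then R (tE p x) else 0) = 0 :=
    Finset.sum_eq_zero fun y hy => if_neg (key y ((mem_termIdx Cl p).1 hy).1)
  show ∑ d ∈ delta Cl p, (if d.src = stt p j i then R d else 0) = _
  rw [sum_delta Cl p (fun d => if d.src = stt p j i then R d else 0), h1, h2, h3]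

lemma tgtCount_q0 : (gr Cl p).tgtCount R (q0' p) = 0 := by
  have h1 : ∑ j : Fin m, R (bE p j) * (bE p j).tgt (q0' p) = 0 :=
    Finset.sum_eq_zero fun j _ => by
      have : (bE p j).tgt (q0' p) = 0 := if_neg fun h => stt_ne_q0' p h.symm
      rw [this, Nat.mul_zero]
  have h2 : ∑ x ∈ cycIdx Cl p, R (cE Cl p x) * (cE Cl p x).tgt (q0' p) = 0 :=
    Finset.sum_eq_zero fun x _ => by
      have : (cE Cl p x).tgt (q0' p) = 0 := if_neg fun h => stt_ne_q0' p h.symm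
      rw [this, Nat.mul_zero]
  have h3 : ∑ x ∈ termIdx Cl p, R (tE p x) * (tE p x).tgt (q0' p) = 0 :=
    Finset.sum_eq_zero fun x _ => Nat.mul_zero _
  show ∑ d ∈ delta Cl p, R d * d.tgt (q0' p) = 0
  rw [sum_delta Cl p (fun d => R d * d.tgt (q0' p)), h1, h2, h3]

lemma tgtCount_stt (hp : ∀ i, 2 ≤ p i) {j : Fin m} {i : ℕ} (hi : i < Mc Cl p j) :
    (gr Cl p).tgtCount R (stt p j i) =
      (if i = 0 then R (bE p j) else 0) +
        R (cE Cl p (j, (i + Mc Cl p j - 1) % Mc Cl p j)) := by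
  have hM := Mc_pos Cl p hp j
  have hiB := lt_of_lt_of_le hi (Mc_le_BB Cl p j)
  have h1 : ∑ j' : Fin m, R (bE p j') * (bE p j').tgt (stt p j i)
      = if i = 0 then R (bE p j) else 0 := by
    by_cases h0 : i = 0
    · subst h0; rw [if_pos rfl]
      rw [Finset.sum_eq_single_of_mem j (Finset.mem_univ j) (fun j' _ hne => by
        have : (bE p j').tgt (stt p j 0) = 0 := if_neg fun h => by
          obtain ⟨ha, _⟩ := stt_inj p hiB (BB_pos p) h
          exact hne ha.symm
        rw [this, Nat.mul_zero])]
      have : (bE p j).tgt (stt p j 0) = 1 := if_pos rfl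
      rw [this, Nat.mul_one]
    · rw [if_neg h0]
      refine Finset.sum_eq_zero fun j' _ => ?_
      have : (bE p j').tgt (stt p j i) = 0 := if_neg fun h => by
        obtain ⟨_, hb⟩ := stt_inj p hiB (BB_pos p) h
        exact h0 hb
      rw [this, Nat.mul_zero]
  have h2 : ∑ x ∈ cycIdx Cl p, R (cE Cl p x) * (cE Cl p x).tgt (stt p j i)
      = R (cE Cl p (j, (i + Mc Cl p j - 1) % Mc Cl p j)) := by
    have hprev : (i + Mc Cl p j - 1) % Mc Cl p j < Mc Cl p j := Nat.mod_lt _ hM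
    rw [Finset.sum_eq_single_of_mem (j, (i + Mc Cl p j - 1) % Mc Cl p j)
      ((mem_cycIdx Cl p).2 hprev) (fun y hy hne => by
        have hy2 := (mem_cycIdx Cl p).1 hy
        have : (cE Cl p y).tgt (stt p j i) = 0 := if_neg fun h => by
          obtain ⟨ha, hb⟩ := stt_inj p hiB
            (lt_of_lt_of_le (Nat.mod_lt _ (Mc_pos Cl p hp y.1)) (Mc_le_BB Cl p _)) h
          have h5 : (y.2 + 1) % Mc Cl p y.1 = i := hb.symm
          rw [← ha] at h5 hy2
          exact hne (Prod.ext ha.symm ((succ_eq_iff hM hi hy2).1 h5))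
        rw [this, Nat.mul_zero])]
    have : (cE Cl p (j, (i + Mc Cl p j - 1) % Mc Cl p j)).tgt (stt p j i) = 1 := by
      apply if_pos
      show stt p j i = stt p j (((i + Mc Cl p j - 1) % Mc Cl p j + 1) % Mc Cl p j)
      rw [prev_succ hM hi]
    rw [this, Nat.mul_one]
  have h3 : ∑ x ∈ termIdx Cl p, R (tE p x) * (tE p x).tgt (stt p j i) = 0 :=
    Finset.sum_eq_zero fun x _ => Nat.mul_zero _
  show ∑ d ∈ delta Cl p, R d * d.tgt (stt p j i) = _
  rw [sum_delta Cl p (fun d => R d * d.tgt (stt p j i)), h1, h2, h3, add_zero]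

lemma tgtCount_stt_dead (hp : ∀ i, 2 ≤ p i) {j : Fin m} {i : ℕ} (hi : Mc Cl p j ≤ i)
    (hiB : i < BB p) : (gr Cl p).tgtCount R (stt p j i) = 0 := by
  have h1 : ∑ j' : Fin m, R (bE p j') * (bE p j').tgt (stt p j i) = 0 :=
    Finset.sum_eq_zero fun j' _ => by
      have : (bE p j').tgt (stt p j i) = 0 := if_neg fun h => by
        obtain ⟨_, hb⟩ := stt_inj p hiB (BB_pos p) h
        have := Mc_pos Cl p hp j
        omega
      rw [this, Nat.mul_zero]
  have h2 : ∑ x ∈ cycIdx Cl p, R (cE Cl p x) * (cE Cl p x).tgt (stt p j i) = 0 :=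
    Finset.sum_eq_zero fun y hy => by
      have : (cE Cl p y).tgt (stt p j i) = 0 := if_neg fun h => by
        obtain ⟨ha, hb⟩ := stt_inj p hiB
          (lt_of_lt_of_le (Nat.mod_lt _ (Mc_pos Cl p hp y.1)) (Mc_le_BB Cl p _)) h
        rw [← ha] at hb
        have hlt := Nat.mod_lt (y.2 + 1) (Mc_pos Cl p hp j)
        omega
      rw [this, Nat.mul_zero]
  have h3 : ∑ x ∈ termIdx Cl p, R (tE p x) * (tE p x).tgt (stt p j i) = 0 :=
    Finset.sum_eq_zero fun x _ => Nat.mul_zero _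
  show ∑ d ∈ delta Cl p, R d * d.tgt (stt p j i) = _
  rw [sum_delta Cl p (fun d => R d * d.tgt (stt p j i)), h1, h2, h3]

lemma parikh_eq : (gr Cl p).parikh R 0 = ∑ x ∈ cycIdx Cl p, (R (cE Cl p x) : ℤ) := by
  have h1 : ∑ j : Fin m, (R (bE p j) : ℤ) * (bE p j).out 0 = 0 :=
    Finset.sum_eq_zero fun j _ => mul_zero _
  have h2 : ∑ x ∈ cycIdx Cl p, (R (cE Cl p x) : ℤ) * (cE Cl p x).out 0
      = ∑ x ∈ cycIdx Cl p, (R (cE Cl p x) : ℤ) :=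
    Finset.sum_congr rfl fun x _ => mul_one _
  have h3 : ∑ x ∈ termIdx Cl p, (R (tE p x) : ℤ) * (tE p x).out 0 = 0 :=
    Finset.sum_eq_zero fun x _ => mul_zero _
  show ∑ d ∈ delta Cl p, (R d : ℤ) * d.out 0 = _
  rw [sum_delta Cl p (fun d => (R d : ℤ) * d.out 0), h1, h2, h3, zero_add, add_zero]

end Compute

lemma sum_one {α : Type} [DecidableEq α] {s : Finset α} {f : α → ℕ} (h : ∑ a ∈ s, f a = 1) :
    ∃ a ∈ s, f a = 1 ∧ ∀ b ∈ s, b ≠ a → f b = 0 := by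
  have hex : ∃ a ∈ s, f a ≠ 0 := by
    by_contra hc
    push_neg at hc
    rw [Finset.sum_eq_zero hc] at h
    exact one_ne_zero h.symm
  obtain ⟨a, ha, hfa⟩ := hex
  have h1 : f a ≤ 1 := h ▸ Finset.single_le_sum (fun i _ => Nat.zero_le _) ha
  have hadd := Finset.add_sum_erase s f ha
  have hrest : ∑ b ∈ s.erase a, f b = 0 := by omega
  refine ⟨a, ha, by omega, fun b hb hne => ?_⟩
  exact (Finset.sum_eq_zero_iff.1 hrest) b (Finset.mem_erase.2 ⟨hne, hb⟩)

lemma sum_prev {β : Type} [AddCommMonoid β] {M : ℕ} (hM : 0 < M) (f : ℕ → β) :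
    ∑ i ∈ Finset.range M, f ((i + M - 1) % M) = ∑ i ∈ Finset.range M, f i := by
  refine Finset.sum_nbij' (i := fun i => (i + M - 1) % M) (j := fun i => (i + 1) % M)
    ?_ ?_ ?_ ?_ ?_
  · intro a ha
    exact Finset.mem_range.2 (Nat.mod_lt _ hM)
  · intro a ha
    exact Finset.mem_range.2 (Nat.mod_lt _ hM)
  · intro a ha
    exact prev_succ hM (Finset.mem_range.1 ha)
  · intro a ha
    exact ((succ_eq_iff hM (Nat.mod_lt _ hM) (Finset.mem_range.1 ha)).1 rfl).symm
  · intro a ha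
    rfl

lemma sum_ite_ge {M r : ℕ} (hr : r ≤ M) :
    ∑ i ∈ Finset.range M, (if r ≤ i then (1 : ℤ) else 0) = (M : ℤ) - r := by
  rw [Finset.sum_boole]
  have : (Finset.range M).filter (fun i => r ≤ i) = Finset.Ico r M := by
    ext i
    simp only [Finset.mem_filter, Finset.mem_range, Finset.mem_Ico]
    omega
  rw [this, Nat.card_Ico]
  push_cast [Nat.cast_sub hr]
  ring

lemma sum_ite_lt {M r : ℕ} (hr : r ≤ M) :
    ∑ i ∈ Finset.range M, (if i < r then (1 : ℤ) else 0) = (r : ℤ) := by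
  rw [Finset.sum_boole]
  have : (Finset.range M).filter (fun i => i < r) = Finset.range r := by
    ext i
    simp only [Finset.mem_filter, Finset.mem_range]
    omega
  rw [this, Finset.card_range]

lemma dvd_Mc (j : Fin m) (t : Fin 3) : p (Cl j t).1 ∣ Mc Cl p j := by
  have h0 : p (Cl j 0).1 ∣ Mc Cl p j := Dvd.intro _ rfl
  have h1 : p (Cl j 1).1 ∣ Mc Cl p j := ⟨p (Cl j 0).1 * p (Cl j 2).1, by rw [Mc]; ring⟩
  have h2 : p (Cl j 2).1 ∣ Mc Cl p j := ⟨p (Cl j 0).1 * p (Cl j 1).1, by rw [Mc]; ring⟩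
  fin_cases t
  · exact h0
  · exact h1
  · exact h2

lemma fals_mod (j : Fin m) (x : ℕ) :
    fals Cl p j (x % Mc Cl p j) ↔
      ∀ t : Fin 3, x % p (Cl j t).1 ≠ (if (Cl j t).2 then 1 else 0) := by
  unfold fals
  refine forall_congr' fun t => ?_
  rw [Nat.mod_mod_of_dvd x (dvd_Mc Cl p j t)]

lemma sum_ind (s : Fin (m * BB p + 1)) : ∑ q, ind s q = 1 := by
  simp [ind]

lemma mem_delta {d : CTrans (Fin 1) (Fin (m * BB p + 1))} (hd : d ∈ delta Cl p) :
    (∃ j, d = bE p j) ∨ (∃ x ∈ cycIdx Cl p, d = cE Cl p x) ∨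
      (∃ x ∈ termIdx Cl p, d = tE p x) := by
  rcases Finset.mem_union.1 hd with h | h
  · rcases Finset.mem_union.1 h with h' | h'
    · obtain ⟨j, _, rfl⟩ := Finset.mem_image.1 h'
      exact Or.inl ⟨j, rfl⟩
    · obtain ⟨x, hx, rfl⟩ := Finset.mem_image.1 h'
      exact Or.inr (Or.inl ⟨x, hx, rfl⟩)
  · obtain ⟨x, hx, rfl⟩ := Finset.mem_image.1 h
    exact Or.inr (Or.inr ⟨x, hx, rfl⟩)

lemma bE_mem (j : Fin m) : bE p j ∈ delta Cl p :=
  Finset.mem_union_left _ (Finset.mem_union_left _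
    (Finset.mem_image.2 ⟨j, Finset.mem_univ _, rfl⟩))

lemma cE_mem {x : Fin m × ℕ} (hx : x ∈ cycIdx Cl p) : cE Cl p x ∈ delta Cl p :=
  Finset.mem_union_left _ (Finset.mem_union_right _ (Finset.mem_image.2 ⟨x, hx, rfl⟩))

lemma tE_mem {x : Fin m × ℕ} (hx : x ∈ termIdx Cl p) : tE p x ∈ delta Cl p :=
  Finset.mem_union_right _ (Finset.mem_image.2 ⟨x, hx, rfl⟩)

lemma gr_regular : (gr Cl p).Regular := by
  intro d hd
  rcases mem_delta Cl p hd with ⟨j, rfl⟩ | ⟨x, hx, rfl⟩ | ⟨x, hx, rfl⟩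
  · constructor
    · rw [show (bE p j).tgt = ind (stt p j 0) from rfl, sum_ind]
    · simp [bE]
  · constructor
    · rw [show (cE Cl p x).tgt = ind (stt p x.1 ((x.2 + 1) % Mc Cl p x.1)) from rfl, sum_ind]
    · simp [cE]
  · constructor
    · simp [tE]
    · simp [tE]

lemma gr_positive : (gr Cl p).Positive := by
  intro d hd
  rcases mem_delta Cl p hd with ⟨j, rfl⟩ | ⟨x, hx, rfl⟩ | ⟨x, hx, rfl⟩ <;>
    intro a <;> simp [bE, cE, tE]

lemma card_delta_le : (delta Cl p).card ≤ m + m * BB p + m * BB p := by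
  have h1 : ((Finset.univ : Finset (Fin m)).image (bE p)).card ≤ m := by
    refine le_trans Finset.card_image_le ?_
    simp
  have hcyc : (cycIdx Cl p).card ≤ m * BB p := by
    refine le_trans (Finset.card_filter_le _ _) ?_
    simp
  have h2 : ((cycIdx Cl p).image (cE Cl p)).card ≤ m * BB p :=
    le_trans Finset.card_image_le hcyc
  have h3 : ((termIdx Cl p).image (tE p)).card ≤ m * BB p :=
    le_trans Finset.card_image_le (le_trans (Finset.card_filter_le _ _) hcyc)
  have h4 := Finset.card_union_le
    (((Finset.univ : Finset (Fin m)).image (bE p)) ∪ ((cycIdx Cl p).image (cE Cl p)))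
    ((termIdx Cl p).image (tE p))
  have h5 := Finset.card_union_le ((Finset.univ : Finset (Fin m)).image (bE p))
    ((cycIdx Cl p).image (cE Cl p))
  have : (delta Cl p).card = ((((Finset.univ : Finset (Fin m)).image (bE p)) ∪
      ((cycIdx Cl p).image (cE Cl p))) ∪ ((termIdx Cl p).image (tE p))).card := rfl
  omega

lemma forward (hp : ∀ i, 2 ≤ p i) (j : Fin m) (x : ℕ)
    (hf : fals Cl p j (x % Mc Cl p j)) :
    (fun _ : Fin 1 => (x : ℤ)) ∈ (gr Cl p).PsiSet := by
  have hM : 0 < Mc Cl p j := Mc_pos Cl p hp j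
  set M := Mc Cl p j with hMdef
  set r := x % M with hrdef
  set k := x / M with hkdef
  have hr : r < M := Nat.mod_lt _ hM
  have hx : M * k + r = x := Nat.div_add_mod x M
  set R : CTrans (Fin 1) (Fin (m * BB p + 1)) → ℕ := fun d =>
    (if d = bE p j then 1 else 0) + (if d = tE p (j, r) then 1 else 0) +
      ∑ i ∈ Finset.range M,
        (if d = cE Cl p (j, i) then k + (if i < r then 1 else 0) else 0) with hRdef
  have eb : ∀ j' : Fin m, R (bE p j') = if j' = j then 1 else 0 := by
    intro j'
    simp only [hRdef]
    have e2 : (if bE p j' = tE p (j, r) then (1 : ℕ) else 0) = 0 := if_neg (bE_ne_tE p)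
    have e3 : ∑ i ∈ Finset.range M,
        (if bE p j' = cE Cl p (j, i) then k + (if i < r then 1 else 0) else 0) = 0 :=
      Finset.sum_eq_zero fun i _ => if_neg (bE_ne_cE Cl p)
    rw [e2, e3, add_zero, add_zero]
    by_cases h : j' = j
    · subst h; rw [if_pos rfl, if_pos rfl]
    · rw [if_neg h, if_neg fun hh => h (bE_inj p hh)]
  have ec : ∀ (j' : Fin m) (i' : ℕ), i' < Mc Cl p j' →
      R (cE Cl p (j', i')) = if j' = j then k + (if i' < r then 1 else 0) else 0 := by
    intro j' i' hi'
    simp only [hRdef]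
    rw [if_neg fun h => bE_ne_cE Cl p h.symm, if_neg fun h => cE_ne_tE Cl p h]
    by_cases h : j' = j
    · subst h
      rw [if_pos rfl]
      rw [Finset.sum_eq_single_of_mem i' (Finset.mem_range.2 hi')
        (fun i hi hne => if_neg fun hh => by
          have := cE_inj Cl p hi' (by simpa using Finset.mem_range.1 hi) hh
          exact hne (congrArg Prod.snd this).symm)]
      rw [if_pos rfl]
      simp
    · rw [if_neg h]
      rw [Finset.sum_eq_zero fun i hi => if_neg fun hh => by
        have := cE_inj Cl p hi' (by simpa using Finset.mem_range.1 hi) hh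
        exact h (congrArg Prod.fst this)]
      simp
  have et : ∀ (j' : Fin m) (i' : ℕ), i' < Mc Cl p j' →
      R (tE p (j', i')) = if j' = j ∧ i' = r then 1 else 0 := by
    intro j' i' hi'
    simp only [hRdef]
    rw [if_neg fun h => bE_ne_tE p h.symm]
    rw [Finset.sum_eq_zero fun i hi =>
      if_neg fun hh => cE_ne_tE Cl p hh.symm]
    by_cases h1 : j' = j
    · by_cases h2 : i' = r
      · subst h1; subst h2; simp
      · rw [if_neg fun hh =>
            h2 (congrArg Prod.snd (tE_inj Cl p hi' (by simpa using hr) hh)),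
          if_neg fun hh => h2 hh.2]
        simp
    · rw [if_neg fun hh =>
          h1 (congrArg Prod.fst (tE_inj Cl p hi' (by simpa using hr) hh)),
        if_neg fun hh => h1 hh.1]
      simp
  have hsupp : ∀ d, 0 < R d → d ∈ (gr Cl p).delta := by
    intro d hd
    by_cases h1 : d = bE p j
    · subst h1; exact bE_mem Cl p j
    by_cases h2 : d = tE p (j, r)
    · subst h2; exact tE_mem Cl p ((mem_termIdx Cl p).2 ⟨hr, hf⟩)
    simp only [hRdef] at hd
    rw [if_neg h1, if_neg h2] at hd
    have hex : ∃ i ∈ Finset.range M,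
        (if d = cE Cl p (j, i) then k + (if i < r then 1 else 0) else 0) ≠ 0 := by
      by_contra hc
      push_neg at hc
      rw [Finset.sum_eq_zero hc] at hd
      omega
    obtain ⟨i, hi, hne⟩ := hex
    have hd' : d = cE Cl p (j, i) := by
      by_contra hcc
      rw [if_neg hcc] at hne
      exact hne rfl
    subst hd'
    exact cE_mem Cl p ((mem_cycIdx Cl p).2 (Finset.mem_range.1 hi))
  have heuler : ∀ q, (((gr Cl p).srcCount R q : ℤ)) - ((ind (gr Cl p).q0 q : ℕ) : ℤ)
      = ((gr Cl p).tgtCount R q : ℤ) - (((0 : Fin (m * BB p + 1) → ℕ) q : ℕ) : ℤ) := by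
    intro q
    rcases decode p q with rfl | ⟨j', i, hiB, rfl⟩
    · rw [srcCount_q0 Cl p R, tgtCount_q0 Cl p R,
        Finset.sum_congr rfl fun j' _ => eb j']
      have h1 : ind (gr Cl p).q0 (q0' p) = 1 := if_pos rfl
      rw [h1]
      simp
    · have hind : ind (gr Cl p).q0 (stt p j' i) = 0 := if_neg (stt_ne_q0' p)
      by_cases hlt : i < Mc Cl p j'
      · rw [srcCount_stt Cl p R hlt, tgtCount_stt Cl p R hp hlt, hind,
          ec j' i hlt, et j' i hlt, eb j']
        have hpvlt : (i + Mc Cl p j' - 1) % Mc Cl p j' < Mc Cl p j' :=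
          Nat.mod_lt _ (Mc_pos Cl p hp j')
        rw [ec j' _ hpvlt, prev_val (Mc_pos Cl p hp j') hlt]
        by_cases hj : j' = j
        · subst hj
          have hT : (if fals Cl p j' i then (if j' = j' ∧ i = r then (1 : ℕ) else 0) else 0)
              = if i = r then 1 else 0 := by
            by_cases hir : i = r
            · rw [hir, if_pos hf, if_pos ⟨rfl, rfl⟩, if_pos rfl]
            · have : (if j' = j' ∧ i = r then (1 : ℕ) else 0) = 0 :=
                if_neg fun hh => hir hh.2
              rw [this, ite_self, if_neg hir]
          rw [hT, if_pos rfl, if_pos rfl]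
          rw [← hMdef] at hlt ⊢
          simp only [Pi.zero_apply, Nat.cast_zero, sub_zero]
          split_ifs <;> omega
        · simp [hj]
      · rw [srcCount_stt_dead Cl p R (le_of_not_gt hlt) hiB,
          tgtCount_stt_dead Cl p R hp (le_of_not_gt hlt) hiB, hind]
        simp
  have hreach : ∀ i, i < M → (0 < k ∨ i ≤ r) →
      Relation.ReflTransGen ((gr Cl p).Step R) (q0' p) (stt p j i) := by
    intro i
    induction i with
    | zero =>
      intro h1 h2
      refine Relation.ReflTransGen.single ⟨bE p j, bE_mem Cl p j, ?_, rfl, ?_⟩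
      · rw [eb j]; simp
      · show 0 < ind (stt p j 0) (stt p j 0)
        simp [ind]
    | succ i ih =>
      intro h1 h2
      have hi : i < M := by omega
      refine Relation.ReflTransGen.tail (ih hi (by omega)) ?_
      refine ⟨cE Cl p (j, i), cE_mem Cl p ((mem_cycIdx Cl p).2 hi), ?_, rfl, ?_⟩
      · rw [ec j i hi, if_pos rfl]
        rcases h2 with hk | hir
        · exact lt_of_lt_of_le hk (Nat.le_add_right _ _)
        · rw [if_pos (Nat.lt_of_succ_le hir)]
          exact Nat.succ_pos _
      · show 0 < ind (stt p j ((i + 1) % Mc Cl p j)) (stt p j (i + 1))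
        rw [show (i + 1) % Mc Cl p j = i + 1 from Nat.mod_eq_of_lt h1]
        simp [ind]
  have hconn : ∀ q, 0 < (gr Cl p).srcCount R q →
      ∃ ps, 0 < ind (gr Cl p).q0 ps ∧ Relation.ReflTransGen ((gr Cl p).Step R) ps q := by
    intro q hq
    refine ⟨q0' p, by simp [ind, gr], ?_⟩
    rcases decode p q with rfl | ⟨j', i, hiB, rfl⟩
    · exact Relation.ReflTransGen.refl
    · by_cases hlt : i < Mc Cl p j'
      · rw [srcCount_stt Cl p R hlt, ec j' i hlt, et j' i hlt] at hq
        by_cases hj : j' = j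
        · subst hj
          have hcond : 0 < k ∨ i ≤ r := by
            by_contra hc
            push_neg at hc
            obtain ⟨hk0, hri⟩ := hc
            rw [if_pos rfl] at hq
            have e1 : (if i < r then (1 : ℕ) else 0) = 0 := if_neg (by omega)
            have e2 : (if j' = j' ∧ i = r then (1 : ℕ) else 0) = 0 :=
              if_neg fun hh => ne_of_gt hri hh.2
            rw [e1, e2, ite_self] at hq
            omega
          exact hreach i hlt hcond
        · exfalso
          have e2 : (if j' = j ∧ i = r then (1 : ℕ) else 0) = 0 :=
            if_neg fun hh => hj hh.1
          rw [if_neg hj, e2, ite_self] at hq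
          omega
      · rw [srcCount_stt_dead Cl p R (le_of_not_gt hlt) hiB] at hq
        exact absurd hq (lt_irrefl 0)
  have hpar : (gr Cl p).parikh R = fun _ : Fin 1 => (x : ℤ) := by
    funext a
    have ha : a = 0 := Subsingleton.elim a 0
    subst ha
    rw [parikh_eq Cl p R, sum_cycIdx Cl p (fun y => (R (cE Cl p y) : ℤ))]
    rw [Finset.sum_eq_single_of_mem j (Finset.mem_univ j)
      (fun j' _ hne => Finset.sum_eq_zero fun i hi => by
        rw [ec j' i (Finset.mem_range.1 hi), if_neg hne, Nat.cast_zero])]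
    have hcongr : ∀ i ∈ Finset.range (Mc Cl p j),
        (R (cE Cl p (j, i)) : ℤ) = (k : ℤ) + (if i < r then (1 : ℤ) else 0) := by
      intro i hi
      rw [ec j i (Finset.mem_range.1 hi), if_pos rfl]
      split_ifs <;> push_cast <;> ring
    rw [Finset.sum_congr rfl hcongr, Finset.sum_add_distrib, Finset.sum_const,
      sum_ite_lt (le_of_lt hr), Finset.card_range, nsmul_eq_mul]
    exact_mod_cast congrArg (Nat.cast : ℕ → ℤ) hx
  exact ⟨R, ⟨hsupp, heuler, hconn⟩, hpar⟩

lemma backward (hp : ∀ i, 2 ≤ p i) (x : ℕ)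
    (hx : (fun _ : Fin 1 => (x : ℤ)) ∈ (gr Cl p).PsiSet) :
    ∃ j : Fin m, fals Cl p j (x % Mc Cl p j) := by
  obtain ⟨R, ⟨hsupp, heuler, hconn⟩, hpar⟩ := hx
  have hq0 : ∑ j, R (bE p j) = 1 := by
    have h := heuler (q0' p)
    rw [srcCount_q0 Cl p R, tgtCount_q0 Cl p R] at h
    have h1 : ind (gr Cl p).q0 (q0' p) = 1 := if_pos rfl
    rw [h1] at h
    simp only [Pi.zero_apply, Nat.cast_zero, sub_zero, Nat.cast_one] at h
    omega
  obtain ⟨j0, _, hj0, hother⟩ := sum_one hq0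
  have hM0 : 0 < Mc Cl p j0 := Mc_pos Cl p hp j0
  have step_good : ∀ q q',
      (q = q0' p ∨ ∃ i, i < Mc Cl p j0 ∧ q = stt p j0 i) → (gr Cl p).Step R q q' →
      (q' = q0' p ∨ ∃ i, i < Mc Cl p j0 ∧ q' = stt p j0 i) := by
    rintro q q' hg ⟨d, hd, hRd, hsrc, htgt⟩
    rcases mem_delta Cl p hd with ⟨j, rfl⟩ | ⟨y, hy, rfl⟩ | ⟨y, hy, rfl⟩
    · have hq' : q' = stt p j 0 := by
        by_contra hne
        rw [show (bE p j).tgt q' = ind (stt p j 0) q' from rfl, ind, if_neg hne] at htgt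
        exact absurd htgt (lt_irrefl 0)
      have hj : j = j0 := by
        by_contra hne
        rw [hother j (Finset.mem_univ j) hne] at hRd
        exact absurd hRd (lt_irrefl 0)
      subst hj
      exact Or.inr ⟨0, hM0, hq'⟩
    · have hy2 := (mem_cycIdx Cl p).1 hy
      rcases hg with rfl | ⟨i, hiM, rfl⟩
      · exact absurd hsrc (stt_ne_q0' p)
      · obtain ⟨ha, hb⟩ := stt_inj p (lt_of_lt_of_le hy2 (Mc_le_BB Cl p _))
          (lt_of_lt_of_le hiM (Mc_le_BB Cl p _)) hsrc
        have hq' : q' = stt p y.1 ((y.2 + 1) % Mc Cl p y.1) := by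
          by_contra hne
          rw [show (cE Cl p y).tgt q' = ind (stt p y.1 ((y.2 + 1) % Mc Cl p y.1)) q'
            from rfl, ind, if_neg hne] at htgt
          exact absurd htgt (lt_irrefl 0)
        refine Or.inr ⟨(y.2 + 1) % Mc Cl p y.1, ?_, ?_⟩
        · rw [ha]
          exact Nat.mod_lt _ hM0
        · rw [hq', ha]
    · exact absurd htgt (lt_irrefl 0)
  have used_good : ∀ d : CTrans (Fin 1) (Fin (m * BB p + 1)), 0 < R d →
      (d.src = q0' p ∨ ∃ i, i < Mc Cl p j0 ∧ d.src = stt p j0 i) := by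
    intro d hRd
    have hd := hsupp d hRd
    have hpos : 0 < (gr Cl p).srcCount R d.src := by
      have hle := Finset.single_le_sum
        (f := fun d' : CTrans (Fin 1) (Fin (m * BB p + 1)) =>
          if d'.src = d.src then R d' else 0)
        (fun i _ => Nat.zero_le _) hd
      simp only [if_pos rfl] at hle
      exact lt_of_lt_of_le hRd hle
    obtain ⟨ps, hps, hpath⟩ := hconn d.src hpos
    have hps' : ps = q0' p := by
      by_contra hne
      rw [ind] at hps
      rw [if_neg (fun hh : ps = (gr Cl p).q0 => hne hh)] at hps
      exact absurd hps (lt_irrefl 0)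
    subst hps'
    have main : ∀ z, Relation.ReflTransGen ((gr Cl p).Step R) (q0' p) z →
        (z = q0' p ∨ ∃ i, i < Mc Cl p j0 ∧ z = stt p j0 i) := by
      intro z hpath'
      induction hpath' with
      | refl => exact Or.inl rfl
      | tail h1 h2 ih => exact step_good _ _ ih h2
    exact main _ hpath
  have cyc_zero : ∀ y ∈ cycIdx Cl p, y.1 ≠ j0 → R (cE Cl p y) = 0 := by
    intro y hy hne
    by_contra h0
    rcases used_good (cE Cl p y) (Nat.pos_of_ne_zero h0) with hq | ⟨i, hiM, hq⟩
    · exact stt_ne_q0' p hq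
    · obtain ⟨ha, _⟩ := stt_inj p
        (lt_of_lt_of_le ((mem_cycIdx Cl p).1 hy) (Mc_le_BB Cl p _))
        (lt_of_lt_of_le hiM (Mc_le_BB Cl p _)) hq
      exact hne ha
  have Tfals : ∀ i, i < Mc Cl p j0 → 0 < R (tE p (j0, i)) → fals Cl p j0 i := by
    intro i hiM hTi
    have hd := hsupp _ hTi
    rcases mem_delta Cl p hd with ⟨j, hj⟩ | ⟨y, hy, hyE⟩ | ⟨y, hy, hyE⟩
    · have : stt p j0 i = q0' p := congrArg CTrans.src hj
      exact absurd this (stt_ne_q0' p)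
    · have := congrFun (congrArg CTrans.out hyE) 0
      simp [tE, cE] at this
    · have hxy := tE_inj Cl p hiM ((mem_termIdx Cl p).1 hy).1 hyE
      have hh := ((mem_termIdx Cl p).1 hy).2
      rw [← hxy] at hh
      exact hh
  have EQ : ∀ i, i < Mc Cl p j0 →
      R (cE Cl p (j0, i)) + R (tE p (j0, i)) =
        (if i = 0 then 1 else 0) +
          R (cE Cl p (j0, (i + Mc Cl p j0 - 1) % Mc Cl p j0)) := by
    intro i hiM
    have h := heuler (stt p j0 i)
    rw [srcCount_stt Cl p R hiM, tgtCount_stt Cl p R hp hiM] at h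
    have hind : ind (gr Cl p).q0 (stt p j0 i) = 0 := if_neg (stt_ne_q0' p)
    rw [hind] at h
    have hite : (if fals Cl p j0 i then R (tE p (j0, i)) else 0) = R (tE p (j0, i)) := by
      by_cases hf : fals Cl p j0 i
      · rw [if_pos hf]
      · rw [if_neg hf]
        rcases Nat.eq_zero_or_pos (R (tE p (j0, i))) with h0 | h0
        · rw [h0]
        · exact absurd (Tfals i hiM h0) hf
    rw [hite, hj0] at h
    simp only [Pi.zero_apply, Nat.cast_zero, sub_zero] at h
    by_cases hi0 : i = 0 <;> simp only [hi0, if_pos, if_neg, if_true, if_false,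
      reduceIte] at h ⊢ <;> omega
  have hsumT : ∑ i ∈ Finset.range (Mc Cl p j0), R (tE p (j0, i)) = 1 := by
    have h1 : ∑ i ∈ Finset.range (Mc Cl p j0), (R (cE Cl p (j0, i)) + R (tE p (j0, i)))
        = ∑ i ∈ Finset.range (Mc Cl p j0), ((if i = 0 then 1 else 0) +
            R (cE Cl p (j0, (i + Mc Cl p j0 - 1) % Mc Cl p j0))) :=
      Finset.sum_congr rfl fun i hi => EQ i (Finset.mem_range.1 hi)
    rw [Finset.sum_add_distrib, Finset.sum_add_distrib,
      sum_prev hM0 (fun i => R (cE Cl p (j0, i)))] at h1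
    have h2 : ∑ i ∈ Finset.range (Mc Cl p j0), (if i = 0 then (1 : ℕ) else 0) = 1 := by
      rw [Finset.sum_ite_eq' (Finset.range (Mc Cl p j0)) 0 fun _ => (1 : ℕ),
        if_pos (Finset.mem_range.2 hM0)]
    rw [h2] at h1
    omega
  obtain ⟨r, hrmem, hTr, hTother⟩ := sum_one hsumT
  have hrM : r < Mc Cl p j0 := Finset.mem_range.1 hrmem
  have hfalsr : fals Cl p j0 r := Tfals r hrM (by omega)
  have Tval : ∀ i, i < Mc Cl p j0 → R (tE p (j0, i)) = if i = r then 1 else 0 := by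
    intro i hiM
    by_cases h : i = r
    · rw [h, if_pos rfl]; exact hTr
    · rw [if_neg h]; exact hTother i (Finset.mem_range.2 hiM) h
  have key : ∀ i, i < Mc Cl p j0 → (R (cE Cl p (j0, i)) : ℤ)
      = (R (cE Cl p (j0, Mc Cl p j0 - 1)) : ℤ) + 1 - (if r ≤ i then 1 else 0) := by
    intro i
    induction i with
    | zero =>
      intro h0
      have h := EQ 0 h0
      rw [Tval 0 h0, prev_val hM0 h0, if_pos rfl, if_pos rfl] at h
      by_cases h0r : r = 0
      · rw [if_pos (by omega : r ≤ 0)]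
        rw [if_pos h0r.symm] at h
        omega
      · rw [if_neg (by omega : ¬ r ≤ 0)]
        rw [if_neg (fun hh => h0r hh.symm)] at h
        omega
    | succ i ih =>
      intro hs
      have hiM : i < Mc Cl p j0 := by omega
      have h := EQ (i + 1) hs
      have hprev : (i + 1 + Mc Cl p j0 - 1) % Mc Cl p j0 = i := by
        have he : i + 1 + Mc Cl p j0 - 1 = i + Mc Cl p j0 := by omega
        rw [he, Nat.add_mod_right]
        exact Nat.mod_eq_of_lt hiM
      rw [Tval (i + 1) hs, hprev, if_neg (Nat.succ_ne_zero i)] at h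
      have hihv := ih hiM
      by_cases hir : i + 1 = r
      · rw [if_pos hir] at h
        rw [if_neg (by omega : ¬ r ≤ i)] at hihv
        rw [if_pos (by omega : r ≤ i + 1)]
        omega
      · rw [if_neg hir] at h
        by_cases hri : r ≤ i
        · rw [if_pos hri] at hihv
          rw [if_pos (by omega : r ≤ i + 1)]
          omega
        · rw [if_neg hri] at hihv
          rw [if_neg (by omega : ¬ r ≤ i + 1)]
          omega
  have hpar0 : (gr Cl p).parikh R 0 = (x : ℤ) := congrFun hpar 0
  rw [parikh_eq Cl p R, sum_cycIdx Cl p (fun y => (R (cE Cl p y) : ℤ))] at hpar0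
  rw [Finset.sum_eq_single_of_mem j0 (Finset.mem_univ j0)
    (fun j' _ hne => Finset.sum_eq_zero fun i hi => by
      rw [cyc_zero (j', i) ((mem_cycIdx Cl p).2 (Finset.mem_range.1 hi)) hne,
        Nat.cast_zero])] at hpar0
  rw [Finset.sum_congr rfl (fun i hi => key i (Finset.mem_range.1 hi))] at hpar0
  rw [Finset.sum_sub_distrib, Finset.sum_const, Finset.card_range, nsmul_eq_mul,
    sum_ite_ge (le_of_lt hrM)] at hpar0
  have hxr : (x : ℤ) = (Mc Cl p j0 : ℤ) * (R (cE Cl p (j0, Mc Cl p j0 - 1)) : ℤ) + r := by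
    linarith
  have hxrn : x = Mc Cl p j0 * R (cE Cl p (j0, Mc Cl p j0 - 1)) + r := by
    exact_mod_cast hxr
  have hmod : x % Mc Cl p j0 = r := by
    rw [hxrn, Nat.mul_add_mod, Nat.mod_eq_of_lt hrM]
  exact ⟨j0, by rw [hmod]; exact hfalsr⟩

end Red


/-- coNP-hardness reduction for universality of regular commutative grammars over a
one-letter alphabet: for every 3CNF formula with `n` variables and clauses
`Cl j : Fin 3 → Fin n × Bool`, given distinct primes `p₁,…,p_n`, there is a
polynomial-size positive regular grammar `g` over `{a}` such that a number `x` is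
not in `Ψ(g)` iff the formula is satisfied by the assignment `x_i = x mod p_i`. -/
theorem universality_coNP_reduction :
    ∃ c : ℕ, ∀ (n m : ℕ) (Cl : Fin m → Fin 3 → Fin n × Bool) (p : Fin n → ℕ),
      (∀ i, Nat.Prime (p i)) → Function.Injective p →
      ∃ (q : ℕ) (g : CGrammar (Fin 1) (Fin (q + 1))),
        g.Regular ∧ g.Positive ∧
        q + 1 ≤ c * (m + 1) * ((∑ i, p i) + 2) ^ 3 ∧
        g.delta.card ≤ c * (m + 1) * ((∑ i, p i) + 2) ^ 3 ∧
        ∀ x : ℕ,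
          ((fun _ : Fin 1 => (x : ℤ)) ∉ g.PsiSet ↔
            ∀ j : Fin m, ∃ t : Fin 3,
              x % p (Cl j t).1 = (if (Cl j t).2 then 1 else 0)) := by
  refine ⟨3, fun n m Cl p hprime _ => ?_⟩
  have hp2 : ∀ i, 2 ≤ p i := fun i => (hprime i).two_le
  have hB := Red.BB_pos p
  have hBdef : ((∑ i, p i) + 2) ^ 3 = Red.BB p := rfl
  refine ⟨m * Red.BB p, Red.gr Cl p, Red.gr_regular Cl p, Red.gr_positive Cl p, ?_, ?_, ?_⟩
  · rw [hBdef]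
    have h1 : m ≤ m * Red.BB p := Nat.le_mul_of_pos_right m hB
    have h2 : 3 * (m + 1) * Red.BB p = 3 * (m * Red.BB p) + 3 * Red.BB p := by ring
    omega
  · rw [hBdef]
    have h0 := Red.card_delta_le Cl p
    have h1 : m ≤ m * Red.BB p := Nat.le_mul_of_pos_right m hB
    have h2 : 3 * (m + 1) * Red.BB p = 3 * (m * Red.BB p) + 3 * Red.BB p := by ring
    have h3 : (Red.gr Cl p).delta.card = (Red.delta Cl p).card := rfl
    omega
  · intro x
    constructor
    · intro hnot j
      by_contra hc
      push_neg at hc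
      exact hnot (Red.forward Cl p hp2 j x ((Red.fals_mod Cl p j x).2 hc))
    · intro hall hin
      obtain ⟨j0, hj0⟩ := Red.backward Cl p hp2 x hin
      obtain ⟨t, ht⟩ := hall j0
      exact ((Red.fals_mod Cl p j0 x).1 hj0 t) ht
end
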